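/- Let k be a perfect field of characteristic p > 0, let A = k[[x_1, …, x_d]] be the formal power series ring in d ≥ 1 variables with maximal ideal m, let f ∈ m^n ∖ m^{n+1} for some integer n ≥ 1, and let t ≥ 0 be a rational number. (1) If f^{⌊t(p^e−1)⌋} ∉ m^{[p^e]} for every integer e ≥ 1 (i.e., the pair (A, t·div(f)) is F-pure), then t ≤ d/n. (2) If for every nonzero c ∈ A there exists an integer e ≥ 1 such that c·f^{⌊t(p^e−1)⌋} ∉ m^{[p^e]} (i.e., the pair (A, t·div(f)) is strongly F-regular), then t < d/n. -/

import Mathlib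

/-- The `q`-th bracket (Frobenius) power `J^{[q]}` of an ideal. -/
def bracketPow {R : Type*} [CommRing R] (J : Ideal R) (q : ℕ) : Ideal R :=
  Ideal.span ((fun a => a ^ q) '' (J : Set R))

open MvPowerSeries

section Aux

variable {k : Type*} [Field k] {d : ℕ}

lemma mem_maxIdeal_iff (g : MvPowerSeries (Fin d) k) :
    g ∈ IsLocalRing.maximalIdeal (MvPowerSeries (Fin d) k) ↔
      constantCoeff g = 0 := by
  rw [IsLocalRing.mem_maximalIdeal, mem_nonunits_iff,
    MvPowerSeries.isUnit_iff_constantCoeff, isUnit_iff_ne_zero, not_not]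

lemma coeff_vanish (j : ℕ) (g : MvPowerSeries (Fin d) k)
    (hg : g ∈ (IsLocalRing.maximalIdeal (MvPowerSeries (Fin d) k)) ^ j)
    (s : Fin d →₀ ℕ) (hs : ∑ i, s i < j) :
    MvPowerSeries.coeff s g = 0 := by
  classical
  induction j generalizing g s with
  | zero => omega
  | succ j ih =>
    rw [pow_succ] at hg
    refine Submodule.mul_induction_on hg (fun a ha b hb => ?_) (fun x y ihx ihy => ?_)
    · rw [MvPowerSeries.coeff_mul]
      refine Finset.sum_eq_zero fun P hP => ?_
      replace hP : P.1 + P.2 = s := Finset.HasAntidiagonal.mem_antidiagonal.mp hP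
      have hsum : (∑ i, P.1 i) + (∑ i, P.2 i) = ∑ i, s i := by
        rw [← Finset.sum_add_distrib]
        exact Finset.sum_congr rfl fun i _ => by rw [← Finsupp.add_apply, hP]
      by_cases h1 : (∑ i, P.1 i) < j
      · rw [ih a ha P.1 h1, zero_mul]
      · have h2 : (∑ i, P.2 i) = 0 := by omega
        have : P.2 = 0 := by
          ext i
          exact (Finset.sum_eq_zero_iff.mp h2) i (Finset.mem_univ i)
        rw [this, MvPowerSeries.coeff_zero_eq_constantCoeff_apply,
          (mem_maxIdeal_iff b).mp hb, mul_zero]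
    · rw [map_add, ihx, ihy, add_zero]

lemma mem_span_Xq {q : ℕ} (hq : 1 ≤ q) (g : MvPowerSeries (Fin d) k)
    (hg : ∀ s : Fin d →₀ ℕ, ∑ i, s i ≤ d * (q - 1) → MvPowerSeries.coeff s g = 0) :
    g ∈ Ideal.span (Set.range fun i : Fin d => (X i : MvPowerSeries (Fin d) k) ^ q) := by
  classical
  set hi : (Fin d →₀ ℕ) → Fin d → Prop := fun s i => q ≤ s i ∧ ∀ j, j < i → s j < q with hhi
  set gi : Fin d → MvPowerSeries (Fin d) k := fun i s =>
    if hi (s + Finsupp.single i q) i then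
      MvPowerSeries.coeff (s + Finsupp.single i q) g else 0 with hgi
  have key : g = ∑ i, gi i * (X i : MvPowerSeries (Fin d) k) ^ q := by
    ext s
    rw [map_sum]
    have hterm : ∀ i : Fin d,
        MvPowerSeries.coeff s (gi i * (X i : MvPowerSeries (Fin d) k) ^ q)
          = if hi s i then MvPowerSeries.coeff s g else 0 := by
      intro i
      rw [MvPowerSeries.X_pow_eq, MvPowerSeries.coeff_mul_monomial]
      by_cases hle : Finsupp.single i q ≤ s
      · rw [if_pos hle]
        have hcoe : MvPowerSeries.coeff (s - Finsupp.single i q) (gi i)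
            = if hi ((s - Finsupp.single i q) + Finsupp.single i q) i then
              MvPowerSeries.coeff ((s - Finsupp.single i q) + Finsupp.single i q) g else 0 := rfl
        rw [hcoe, tsub_add_cancel_of_le hle, mul_one]
      · rw [if_neg hle]
        have : ¬ hi s i := fun h => hle (Finsupp.single_le_iff.mpr h.1)
        rw [if_neg this]
    rw [Finset.sum_congr rfl fun i _ => hterm i]
    by_cases hex : ∃ i : Fin d, q ≤ s i
    · obtain ⟨i0, hi0⟩ := hex
      set F : Finset (Fin d) := Finset.univ.filter (fun i => q ≤ s i) with hF
      have hFne : F.Nonempty := ⟨i0, by simp [hF, hi0]⟩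
      set m := F.min' hFne with hm
      have hmF : m ∈ F := F.min'_mem hFne
      have hmq : q ≤ s m := by simpa [hF] using hmF
      have hmhi : hi s m := by
        refine ⟨hmq, fun j hj => ?_⟩
        by_contra hc
        push_neg at hc
        exact absurd (F.min'_le j (by simp [hF, hc])) (by omega)
      rw [Finset.sum_eq_single m ?_ (fun h => absurd (Finset.mem_univ m) h)]
      · rw [if_pos hmhi]
      · intro b _ hb
        rw [if_neg]
        intro hbhi
        rcases lt_trichotomy b m with h | h | h
        · exact absurd (F.min'_le b (by simp [hF, hbhi.1])) (by omega)
        · exact hb h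
        · have := hbhi.2 m h; omega
    · push_neg at hex
      have : ∑ i, s i ≤ d * (q - 1) := by
        calc ∑ i, s i ≤ ∑ _i : Fin d, (q - 1) :=
              Finset.sum_le_sum fun i _ => by have := hex i; omega
          _ = d * (q - 1) := by simp [Finset.sum_const, mul_comm]
      rw [hg s this]
      simp
  rw [key]
  exact Ideal.sum_mem _ fun i _ => Ideal.mul_mem_left _ _
    (Ideal.subset_span ⟨i, rfl⟩)

lemma pow_not_mem_bound {q j : ℕ} (hq : 1 ≤ q) {g : MvPowerSeries (Fin d) k}
    (hg : g ∈ (IsLocalRing.maximalIdeal (MvPowerSeries (Fin d) k)) ^ j)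
    (hng : g ∉ bracketPow (IsLocalRing.maximalIdeal (MvPowerSeries (Fin d) k)) q) :
    j ≤ d * (q - 1) := by
  by_contra hc
  push_neg at hc
  apply hng
  have hsp : g ∈ Ideal.span (Set.range fun i : Fin d =>
      (X i : MvPowerSeries (Fin d) k) ^ q) :=
    mem_span_Xq hq g fun s hs => coeff_vanish j g hg s (lt_of_le_of_lt hs hc)
  refine Ideal.span_le.mpr ?_ hsp
  rintro _ ⟨i, rfl⟩
  refine Ideal.subset_span ⟨X i, ?_, rfl⟩
  rw [SetLike.mem_coe, mem_maxIdeal_iff]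
  exact MvPowerSeries.constantCoeff_X i

end Aux

/-- For `f` of multiplicity `n` in `A = k[[x₁, …, x_d]]`: if the pair `(A, t·div f)` is
F-pure then `t ≤ d/n`, and if it is strongly F-regular then `t < d/n`. -/
theorem stmt_14 (p : ℕ) (hp : p.Prime) (k : Type*) [Field k] [CharP k p]
    [ExpChar k p] [PerfectRing k p] (d : ℕ) (hd : 1 ≤ d) (n : ℕ) (hn : 1 ≤ n)
    (f : MvPowerSeries (Fin d) k)
    (hf1 : f ∈ (IsLocalRing.maximalIdeal (MvPowerSeries (Fin d) k)) ^ n)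
    (hf2 : f ∉ (IsLocalRing.maximalIdeal (MvPowerSeries (Fin d) k)) ^ (n + 1))
    (t : ℚ) (ht0 : 0 ≤ t) :
    ((∀ e : ℕ, 1 ≤ e →
        f ^ ⌊t * ((p : ℚ) ^ e - 1)⌋₊ ∉
          bracketPow (IsLocalRing.maximalIdeal (MvPowerSeries (Fin d) k)) (p ^ e)) →
      t ≤ (d : ℚ) / n) ∧
    ((∀ c : MvPowerSeries (Fin d) k, c ≠ 0 →
        ∃ e : ℕ, 1 ≤ e ∧
          c * f ^ ⌊t * ((p : ℚ) ^ e - 1)⌋₊ ∉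
            bracketPow (IsLocalRing.maximalIdeal (MvPowerSeries (Fin d) k)) (p ^ e)) →
      t < (d : ℚ) / n) := by
  have hn0 : (0:ℚ) < n := by exact_mod_cast hn
  have hp1 : (1:ℚ) < p := by exact_mod_cast hp.one_lt
  have hkey : ∀ e : ℕ, ∀ M : ℕ,
      f ^ M ∉ bracketPow (IsLocalRing.maximalIdeal (MvPowerSeries (Fin d) k)) (p ^ e) →
      (n : ℚ) * M ≤ d * ((p : ℚ) ^ e - 1) := by
    intro e M hM
    have h1 : 1 ≤ p ^ e := Nat.one_le_pow _ _ hp.pos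
    have hb : n * M ≤ d * (p ^ e - 1) :=
      pow_not_mem_bound h1 (by rw [pow_mul]; exact Ideal.pow_mem_pow hf1 M) hM
    have := (Nat.cast_le (α := ℚ)).mpr hb
    push_cast [Nat.cast_sub h1] at this
    convert this using 2 <;> push_cast <;> ring
  constructor
  · intro h
    by_contra hlt
    push_neg at hlt
    have hdt : (d : ℚ) < n * t := by
      rw [div_lt_iff₀ hn0] at hlt; linarith
    obtain ⟨e0, he0⟩ := pow_unbounded_of_one_lt ((n : ℚ) / (n * t - d) + 1) hp1
    set e := e0 + 1 with he_def
    have hpe : (n : ℚ) / (n * t - d) + 1 < (p : ℚ) ^ e :=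
      lt_of_lt_of_le he0 (pow_le_pow_right₀ hp1.le (Nat.le_succ e0))
    set Qq : ℚ := (p : ℚ) ^ e - 1 with hQq
    have hb := hkey e _ (h e (by omega))
    rw [← hQq] at hb
    set N := ⌊t * Qq⌋₊ with hN
    have hfl : t * Qq < N + 1 := Nat.lt_floor_add_one _
    have h2 : (n : ℚ) * (t * Qq) < n * (N + 1) := by
      exact mul_lt_mul_of_pos_left hfl hn0
    have hdiv : (n : ℚ) / (n * t - d) < Qq := by
      have : (0:ℚ) < (p:ℚ) ^ e := by positivity
      simp only [hQq]; linarith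
    have hbig : (n : ℚ) < Qq * (n * t - d) :=
      (div_lt_iff₀ (by linarith)).mp hdiv
    have hring : Qq * (n * t - d) = n * (t * Qq) - d * Qq := by ring
    linarith
  · intro h
    have hf0 : f ≠ 0 := fun h0 => hf2 (h0 ▸ Ideal.zero_mem _)
    obtain ⟨e, he, hmem⟩ := h f hf0
    set Qq : ℚ := (p : ℚ) ^ e - 1 with hQq
    set N := ⌊t * Qq⌋₊ with hN
    have hmem' : f ^ (N + 1) ∉
        bracketPow (IsLocalRing.maximalIdeal (MvPowerSeries (Fin d) k)) (p ^ e) := by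
      rw [pow_succ']
      exact hmem
    have hb := hkey e (N + 1) hmem'
    rw [← hQq] at hb
    have hfl : t * Qq < N + 1 := Nat.lt_floor_add_one _
    have hQpos : (0:ℚ) < Qq := by
      have : (p:ℚ) ^ 1 ≤ (p:ℚ) ^ e := pow_le_pow_right₀ hp1.le he
      simp only [hQq]
      have : (2:ℚ) ≤ (p:ℚ) ^ e := by
        calc (2:ℚ) ≤ (p:ℚ) := by exact_mod_cast hp.two_le
          _ = (p:ℚ) ^ 1 := (pow_one _).symm
          _ ≤ (p:ℚ) ^ e := pow_le_pow_right₀ hp1.le he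
      linarith
    have h2 : (n : ℚ) * (t * Qq) < n * (N + 1) := mul_lt_mul_of_pos_left hfl hn0
    have hcast : (n : ℚ) * ((N : ℚ) + 1) = (n : ℚ) * ((N + 1 : ℕ) : ℚ) := by push_cast; ring
    have h3 : (n : ℚ) * (t * Qq) < d * Qq := by
      rw [hcast] at h2; linarith
    have h4 : (n : ℚ) * t < d := by
      have := (mul_lt_mul_iff_of_pos_right hQpos).mp (by linarith [h3] : (n * t) * Qq < d * Qq)
      exact this
    rw [lt_div_iff₀ hn0]
    linarith
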